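/- Assume u(a) = −(1−γ)|1−a| − γ(1−a)² with γ ∈ [0,1] and that f is logconcave on [0,1]. Then W(c) := u(0)F(c/2) + u(c)(F(c)−F(c/2)) + ∫_c^1 u(v)f(v)dv + u(1)(1−F(1)) is quasiconcave on [0,1], and strictly quasiconcave if γ > 0 or f is strictly logconcave on [0,1]. -/

import Mathlib

open intervalIntegral



/-- derivative ratio monotonicity from logconcavity -/
lemma aux_rmono (f : ℝ → ℝ)
    (hfpos : ∀ v ∈ Set.Icc (0:ℝ) 1, 0 < f v)
    (hfC1 : ∀ v ∈ Set.Icc (0:ℝ) 1, DifferentiableAt ℝ f v)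
    (hlc : ConcaveOn ℝ (Set.Icc 0 1) (fun v => Real.log (f v)))
    {x y : ℝ} (hx : x ∈ Set.Icc (0:ℝ) 1) (hy : y ∈ Set.Icc (0:ℝ) 1) (hxy : x ≤ y) :
    deriv f y * f x ≤ deriv f x * f y := by
  have hL : ∀ v ∈ Set.Icc (0:ℝ) 1, HasDerivAt (fun v => Real.log (f v)) (deriv f v / f v) v :=
    fun v hv => ((hfC1 v hv).hasDerivAt).log (hfpos v hv).ne'
  have hanti : AntitoneOn (deriv (fun v => Real.log (f v))) (Set.Icc 0 1) :=
    hlc.antitoneOn_deriv (fun v hv => (hL v hv).differentiableAt)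
  have h1 : deriv f y / f y ≤ deriv f x / f x := by
    have := hanti hx hy hxy
    rwa [(hL x hx).deriv, (hL y hy).deriv] at this
  rwa [div_le_div_iff₀ (hfpos y hy) (hfpos x hx)] at h1

lemma aux_rmono_strict (f : ℝ → ℝ)
    (hfpos : ∀ v ∈ Set.Icc (0:ℝ) 1, 0 < f v)
    (hfC1 : ∀ v ∈ Set.Icc (0:ℝ) 1, DifferentiableAt ℝ f v)
    (hlc : StrictConcaveOn ℝ (Set.Icc 0 1) (fun v => Real.log (f v)))
    {x y : ℝ} (hx : x ∈ Set.Icc (0:ℝ) 1) (hy : y ∈ Set.Icc (0:ℝ) 1) (hxy : x < y) :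
    deriv f y * f x < deriv f x * f y := by
  have hL : ∀ v ∈ Set.Icc (0:ℝ) 1, HasDerivAt (fun v => Real.log (f v)) (deriv f v / f v) v :=
    fun v hv => ((hfC1 v hv).hasDerivAt).log (hfpos v hv).ne'
  have hanti : StrictAntiOn (deriv (fun v => Real.log (f v))) (Set.Icc 0 1) :=
    hlc.strictAntiOn_deriv (fun v hv => (hL v hv).differentiableAt)
  have h1 : deriv f y / f y < deriv f x / f x := by
    have := hanti hx hy hxy
    rwa [(hL x hx).deriv, (hL y hy).deriv] at this
  rwa [div_lt_div_iff₀ (hfpos y hy) (hfpos x hx)] at h1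


/-- weak single crossing of `g w = 4γ f w - φ w * f' w` -/
lemma aux_cross (γ : ℝ) (hγ : γ ∈ Set.Icc (0:ℝ) 1) (f : ℝ → ℝ)
    (hfpos : ∀ v ∈ Set.Icc (0:ℝ) 1, 0 < f v)
    (hfC1 : ∀ v ∈ Set.Icc (0:ℝ) 1, DifferentiableAt ℝ f v)
    (hlc : ConcaveOn ℝ (Set.Icc 0 1) (fun v => Real.log (f v)))
    {x y : ℝ} (hx : x ∈ Set.Icc (0:ℝ) 1) (hy : y ∈ Set.Icc (0:ℝ) 1) (hxy : x ≤ y)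
    (h : 0 ≤ 4*γ*f x - (1-γ+2*γ*(1-x)) * deriv f x) :
    0 ≤ 4*γ*f y - (1-γ+2*γ*(1-y)) * deriv f y := by
  obtain ⟨hγ0, hγ1⟩ := hγ
  obtain ⟨hx0, hx1⟩ := hx
  obtain ⟨hy0, hy1⟩ := hy
  have hfx := hfpos x ⟨hx0, hx1⟩
  have hfy := hfpos y ⟨hy0, hy1⟩
  have hr := aux_rmono f hfpos hfC1 hlc ⟨hx0, hx1⟩ ⟨hy0, hy1⟩ hxy
  have hφy0 : 0 ≤ 1-γ+2*γ*(1-y) := by nlinarith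
  rcases le_or_gt (deriv f y) 0 with hdy | hdy
  · nlinarith
  · have hdx : 0 < deriv f x := by nlinarith
    have hφxy : 1-γ+2*γ*(1-y) ≤ 1-γ+2*γ*(1-x) := by nlinarith
    nlinarith [mul_le_mul_of_nonneg_left hr hφy0,
      mul_le_mul_of_nonneg_right hφxy hdx.le]

lemma aux_cross_strict (γ : ℝ) (hγ : γ ∈ Set.Icc (0:ℝ) 1) (f : ℝ → ℝ)
    (hfpos : ∀ v ∈ Set.Icc (0:ℝ) 1, 0 < f v)
    (hfC1 : ∀ v ∈ Set.Icc (0:ℝ) 1, DifferentiableAt ℝ f v)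
    (hlc : ConcaveOn ℝ (Set.Icc 0 1) (fun v => Real.log (f v)))
    (hstrict : 0 < γ ∨ StrictConcaveOn ℝ (Set.Icc 0 1) (fun v => Real.log (f v)))
    {x y : ℝ} (hx : x ∈ Set.Icc (0:ℝ) 1) (hy : y ∈ Set.Icc (0:ℝ) 1) (hxy : x < y)
    (h : 0 ≤ 4*γ*f x - (1-γ+2*γ*(1-x)) * deriv f x) :
    0 < 4*γ*f y - (1-γ+2*γ*(1-y)) * deriv f y := by
  obtain ⟨hγ0, hγ1⟩ := hγ
  obtain ⟨hx0, hx1⟩ := hx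
  obtain ⟨hy0, hy1⟩ := hy
  have hfx := hfpos x ⟨hx0, hx1⟩
  have hfy := hfpos y ⟨hy0, hy1⟩
  have hr := aux_rmono f hfpos hfC1 hlc ⟨hx0, hx1⟩ ⟨hy0, hy1⟩ hxy.le
  have hφy0 : 0 ≤ 1-γ+2*γ*(1-y) := by nlinarith
  rcases hstrict with hγpos | hscc
  · rcases le_or_gt (deriv f y) 0 with hdy | hdy
    · nlinarith
    · have hdx : 0 < deriv f x := by nlinarith
      have hφxy : 1-γ+2*γ*(1-y) < 1-γ+2*γ*(1-x) := by nlinarith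
      nlinarith [mul_le_mul_of_nonneg_left hr hφy0,
        mul_lt_mul_of_pos_right hφxy hdx]
  · rcases lt_or_ge 0 γ with hγpos | hγ0'
    · rcases le_or_gt (deriv f y) 0 with hdy | hdy
      · nlinarith
      · have hdx : 0 < deriv f x := by nlinarith
        have hφxy : 1-γ+2*γ*(1-y) < 1-γ+2*γ*(1-x) := by nlinarith
        nlinarith [mul_le_mul_of_nonneg_left hr hφy0,
          mul_lt_mul_of_pos_right hφxy hdx]
    · have hγz : γ = 0 := le_antisymm hγ0' hγ0
      subst hγz
      have hrs := aux_rmono_strict f hfpos hfC1 hscc ⟨hx0, hx1⟩ ⟨hy0, hy1⟩ hxy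
      have hdx : deriv f x ≤ 0 := by nlinarith
      have hdy : deriv f y < 0 := by nlinarith
      nlinarith


lemma key_core (g : ℝ → ℝ) (hgc : ContinuousOn g (Set.Icc 0 1))
    {a b s : ℝ} (ha : 0 < a) (hab : a < b) (hb1 : b ≤ 1)
    (hs0 : 0 ≤ s) (hsa : s < a) (hb2s : b/2 < s)
    (hneg : ∀ w ∈ Set.Icc (0:ℝ) 1, w < s → g w < 0)
    (hpos : ∀ w ∈ Set.Icc (0:ℝ) 1, s ≤ w → 0 ≤ g w)
    (hψa : (∫ w in (a/2)..a, (w-a)*g w) ≤ 0) :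
    (∫ w in (b/2)..b, (w-b)*g w) ≤ ∫ w in a..b, (w-b)*g w := by
  have hb0 : 0 < b := ha.trans hab
  set lam : ℝ := (b-s)/(a-s) with hlam_def
  have has : 0 < a - s := by linarith
  have hkey : lam * (a-s) = b-s := div_mul_cancel₀ _ has.ne'
  have hlam1 : 1 ≤ lam := by
    rw [le_div_iff₀ has]; linarith
  have hlam0 : 0 ≤ lam := by linarith
  -- membership facts
  have hmA2 : a/2 ∈ Set.Icc (0:ℝ) 1 := ⟨by linarith, by linarith⟩
  have hmB2 : b/2 ∈ Set.Icc (0:ℝ) 1 := ⟨by linarith, by linarith⟩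
  have hmS : s ∈ Set.Icc (0:ℝ) 1 := ⟨hs0, by linarith⟩
  have hmA : a ∈ Set.Icc (0:ℝ) 1 := ⟨ha.le, by linarith⟩
  have hmB : b ∈ Set.Icc (0:ℝ) 1 := ⟨hb0.le, hb1⟩
  have hint : ∀ (c : ℝ), ∀ p ∈ Set.Icc (0:ℝ) 1, ∀ q ∈ Set.Icc (0:ℝ) 1,
      IntervalIntegrable (fun w => (w - c)*g w) MeasureTheory.volume p q := by
    intro c p hp q hq
    apply ContinuousOn.intervalIntegrable
    exact ContinuousOn.mul (by fun_prop) (hgc.mono (Set.uIcc_subset_Icc hp hq))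
  have hintlam : ∀ (c : ℝ), ∀ p ∈ Set.Icc (0:ℝ) 1, ∀ q ∈ Set.Icc (0:ℝ) 1,
      IntervalIntegrable (fun w => lam*((w - c)*g w)) MeasureTheory.volume p q := by
    intro c p hp q hq
    exact (hint c p hp q hq).const_mul lam
  -- splitting
  have E1 : (∫ w in (b/2)..b, (w-b)*g w)
      = (∫ w in (b/2)..s, (w-b)*g w) + ∫ w in s..b, (w-b)*g w :=
    (integral_add_adjacent_intervals (hint b _ hmB2 _ hmS) (hint b _ hmS _ hmB)).symm
  have E2 : (∫ w in s..b, (w-b)*g w)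
      = (∫ w in s..a, (w-b)*g w) + ∫ w in a..b, (w-b)*g w :=
    (integral_add_adjacent_intervals (hint b _ hmS _ hmA) (hint b _ hmA _ hmB)).symm
  have E3 : (∫ w in (a/2)..s, (w-a)*g w)
      = (∫ w in (a/2)..b/2, (w-a)*g w) + ∫ w in (b/2)..s, (w-a)*g w :=
    (integral_add_adjacent_intervals (hint a _ hmA2 _ hmB2) (hint a _ hmB2 _ hmS)).symm
  have E4 : (∫ w in (a/2)..a, (w-a)*g w)
      = (∫ w in (a/2)..s, (w-a)*g w) + ∫ w in s..a, (w-a)*g w :=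
    (integral_add_adjacent_intervals (hint a _ hmA2 _ hmS) (hint a _ hmS _ hmA)).symm
  -- I1 : pointwise comparison on [b/2, s]
  have I1 : (∫ w in (b/2)..s, (w-b)*g w) ≤ ∫ w in (b/2)..s, lam*((w-a)*g w) := by
    apply integral_mono_on hb2s.le (hint b _ hmB2 _ hmS) (hintlam a _ hmB2 _ hmS)
    intro w hw
    have hw1 : w ∈ Set.Icc (0:ℝ) 1 := ⟨by linarith [hw.1], by linarith [hw.2]⟩
    have hfac : (w-b) - lam*(w-a) = (1-lam)*(w-s) := by linear_combination hkey
    rcases eq_or_lt_of_le hw.2 with heq | hlt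
    · subst heq
      have h0 : (w-b) - lam*(w-a) = 0 := by rw [hfac]; ring
      have : (w-b)*g w = lam*((w-a)*g w) := by linear_combination (g w) * h0
      linarith
    · have hgw : g w < 0 := hneg w hw1 hlt
      have hf1 : 0 ≤ (1-lam)*(w-s) := by nlinarith
      have hprod : ((1-lam)*(w-s))*g w ≤ 0 := mul_nonpos_of_nonneg_of_nonpos hf1 hgw.le
      have heq2 : (w-b)*g w - lam*((w-a)*g w) = ((1-lam)*(w-s))*g w := by
        linear_combination (g w) * hfac
      linarith
  -- I2 : extend region
  have I2 : (∫ w in (b/2)..s, lam*((w-a)*g w)) ≤ lam * ∫ w in (a/2)..s, (w-a)*g w := by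
    rw [integral_const_mul]
    have h1 : 0 ≤ ∫ w in (a/2)..b/2, (w-a)*g w := by
      apply integral_nonneg (by linarith)
      intro w hw
      have hw1 : w ∈ Set.Icc (0:ℝ) 1 := ⟨by linarith [hw.1], by linarith [hw.2]⟩
      have hgw : g w < 0 := hneg w hw1 (by linarith [hw.2])
      have : w - a < 0 := by linarith [hw.2]
      nlinarith
    have h2 : (∫ w in (b/2)..s, (w-a)*g w) ≤ ∫ w in (a/2)..s, (w-a)*g w := by linarith [E3]
    exact mul_le_mul_of_nonneg_left h2 hlam0
  -- I4
  have I4 : lam * (∫ w in (a/2)..s, (w-a)*g w) ≤ lam * (- ∫ w in s..a, (w-a)*g w) := by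
    apply mul_le_mul_of_nonneg_left _ hlam0
    linarith [E4]
  -- I5
  have I5 : lam * (- ∫ w in s..a, (w-a)*g w) + (∫ w in s..a, (w-b)*g w) ≤ 0 := by
    have heq : lam * (- ∫ w in s..a, (w-a)*g w) + (∫ w in s..a, (w-b)*g w)
        = ∫ w in s..a, ((w-b)*g w - lam*((w-a)*g w)) := by
      rw [integral_sub (hint b _ hmS _ hmA) (hintlam a _ hmS _ hmA), integral_const_mul]
      ring
    rw [heq]
    have : (∫ w in s..a, ((w-b)*g w - lam*((w-a)*g w))) ≤ ∫ w in s..a, (0:ℝ) := by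
      apply integral_mono_on hsa.le
        ((hint b _ hmS _ hmA).sub (hintlam a _ hmS _ hmA))
        intervalIntegrable_const
      intro w hw
      have hw1 : w ∈ Set.Icc (0:ℝ) 1 := ⟨by linarith [hw.1], by linarith [hw.2]⟩
      have hgw : 0 ≤ g w := hpos w hw1 hw.1
      have hfac : (w-b) - lam*(w-a) = (1-lam)*(w-s) := by linear_combination hkey
      have hf1 : (1-lam)*(w-s) ≤ 0 := mul_nonpos_of_nonpos_of_nonneg (by linarith) (by linarith [hw.1])
      have heq2 : (w-b)*g w - lam*((w-a)*g w) = ((1-lam)*(w-s))*g w := by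
        linear_combination (g w) * hfac
      rw [heq2]
      exact mul_nonpos_of_nonpos_of_nonneg hf1 hgw
    simpa using this
  linarith [E1, E2, I1, I2, I4, I5]


lemma key_weak (g : ℝ → ℝ) (hgc : ContinuousOn g (Set.Icc 0 1))
    {a b s : ℝ} (ha : 0 < a) (hab : a < b) (hb1 : b ≤ 1)
    (hs0 : 0 ≤ s) (hsa : s < a)
    (hneg : ∀ w ∈ Set.Icc (0:ℝ) 1, w < s → g w < 0)
    (hpos : ∀ w ∈ Set.Icc (0:ℝ) 1, s ≤ w → 0 ≤ g w)
    (hψa : (∫ w in (a/2)..a, (w-a)*g w) ≤ 0) :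
    (∫ w in (b/2)..b, (w-b)*g w) ≤ 0 := by
  have hb0 : 0 < b := ha.trans hab
  have hint : ∀ (c : ℝ), ∀ p ∈ Set.Icc (0:ℝ) 1, ∀ q ∈ Set.Icc (0:ℝ) 1,
      IntervalIntegrable (fun w => (w - c)*g w) MeasureTheory.volume p q := by
    intro c p hp q hq
    apply ContinuousOn.intervalIntegrable
    exact ContinuousOn.mul (by fun_prop) (hgc.mono (Set.uIcc_subset_Icc hp hq))
  rcases lt_or_ge (b/2) s with hcase | hcase
  · have h1 := key_core g hgc ha hab hb1 hs0 hsa hcase hneg hpos hψa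
    have h2 : (∫ w in a..b, (w-b)*g w) ≤ ∫ w in a..b, (0:ℝ) := by
      apply intervalIntegral.integral_mono_on hab.le
        (hint b a ⟨ha.le, by linarith⟩ b ⟨hb0.le, hb1⟩) intervalIntegrable_const
      intro w hw
      have hgw : 0 ≤ g w := hpos w ⟨by linarith [hw.1], by linarith [hw.2]⟩ (by linarith [hw.1])
      exact mul_nonpos_of_nonpos_of_nonneg (by linarith [hw.2]) hgw
    simp only [intervalIntegral.integral_zero] at h2
    linarith
  · have h2 : (∫ w in (b/2)..b, (w-b)*g w) ≤ ∫ w in (b/2)..b, (0:ℝ) := by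
      apply intervalIntegral.integral_mono_on (by linarith)
        (hint b (b/2) ⟨by linarith, by linarith⟩ b ⟨hb0.le, hb1⟩) intervalIntegrable_const
      intro w hw
      have hgw : 0 ≤ g w := hpos w ⟨by linarith [hw.1], by linarith [hw.2]⟩ (by linarith [hw.1])
      exact mul_nonpos_of_nonpos_of_nonneg (by linarith [hw.2]) hgw
    simpa using h2

lemma key_strict (g : ℝ → ℝ) (hgc : ContinuousOn g (Set.Icc 0 1))
    {a b s : ℝ} (ha : 0 < a) (hab : a < b) (hb1 : b ≤ 1)
    (hs0 : 0 ≤ s) (hsa : s < a)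
    (hneg : ∀ w ∈ Set.Icc (0:ℝ) 1, w < s → g w < 0)
    (hpos : ∀ w ∈ Set.Icc (0:ℝ) 1, s ≤ w → 0 ≤ g w)
    (hposS : ∀ w ∈ Set.Icc (0:ℝ) 1, s < w → 0 < g w)
    (hψa : (∫ w in (a/2)..a, (w-a)*g w) ≤ 0) :
    (∫ w in (b/2)..b, (w-b)*g w) < 0 := by
  have hb0 : 0 < b := ha.trans hab
  have hint' : ∀ p ∈ Set.Icc (0:ℝ) 1, ∀ q ∈ Set.Icc (0:ℝ) 1,
      IntervalIntegrable (fun w => (b - w)*g w) MeasureTheory.volume p q := by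
    intro p hp q hq
    apply ContinuousOn.intervalIntegrable
    exact ContinuousOn.mul (by fun_prop) (hgc.mono (Set.uIcc_subset_Icc hp hq))
  rcases lt_or_ge (b/2) s with hcase | hcase
  · have h1 := key_core g hgc ha hab hb1 hs0 hsa hcase hneg hpos hψa
    have heq : (∫ w in a..b, (w-b)*g w) = -∫ w in a..b, (b-w)*g w := by
      rw [← intervalIntegral.integral_neg]; congr 1; funext w; ring
    have h2 : 0 < ∫ w in a..b, (b-w)*g w := by
      apply intervalIntegral.intervalIntegral_pos_of_pos_on
        (hint' a ⟨ha.le, by linarith⟩ b ⟨hb0.le, hb1⟩) _ hab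
      intro w hw
      have hgw : 0 < g w := hposS w ⟨by linarith [hw.1], by linarith [hw.2]⟩ (by linarith [hw.1])
      exact mul_pos (by linarith [hw.2]) hgw
    rw [heq] at h1; linarith
  · have heq : (∫ w in (b/2)..b, (w-b)*g w) = -∫ w in (b/2)..b, (b-w)*g w := by
      rw [← intervalIntegral.integral_neg]; congr 1; funext w; ring
    have h2 : 0 < ∫ w in (b/2)..b, (b-w)*g w := by
      apply intervalIntegral.intervalIntegral_pos_of_pos_on
        (hint' (b/2) ⟨by linarith, by linarith⟩ b ⟨hb0.le, hb1⟩) _ (by linarith)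
      intro w hw
      have hgw : 0 < g w := hposS w ⟨by linarith [hw.1], by linarith [hw.2]⟩ (by linarith [hw.1])
      exact mul_pos (by linarith [hw.2]) hgw
    rw [heq]; linarith


lemma gcont (γ : ℝ) (f : ℝ → ℝ)
    (hfC1 : ∀ v ∈ Set.Icc (0:ℝ) 1, DifferentiableAt ℝ f v)
    (hfC1' : ContinuousOn (deriv f) (Set.Icc 0 1)) :
    ContinuousOn (fun w => 4*γ*f w - (1-γ+2*γ*(1-w)) * deriv f w) (Set.Icc 0 1) := by
  have hfc : ContinuousOn f (Set.Icc 0 1) :=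
    fun v hv => ((hfC1 v hv).continuousAt).continuousWithinAt
  exact (continuousOn_const.mul hfc).sub
    ((Continuous.continuousOn (by continuity)).mul hfC1')

lemma exists_s (γ : ℝ) (hγ : γ ∈ Set.Icc (0:ℝ) 1) (f : ℝ → ℝ)
    (hfpos : ∀ v ∈ Set.Icc (0:ℝ) 1, 0 < f v)
    (hfC1 : ∀ v ∈ Set.Icc (0:ℝ) 1, DifferentiableAt ℝ f v)
    (hfC1' : ContinuousOn (deriv f) (Set.Icc 0 1))
    (hlc : ConcaveOn ℝ (Set.Icc 0 1) (fun v => Real.log (f v)))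
    {a : ℝ} (ha : 0 < a) (ha1 : a ≤ 1)
    (hψa : (∫ w in (a/2)..a, (w-a)*(4*γ*f w - (1-γ+2*γ*(1-w)) * deriv f w)) ≤ 0) :
    ∃ s, 0 ≤ s ∧ s < a ∧
      (∀ w ∈ Set.Icc (0:ℝ) 1, w < s → 4*γ*f w - (1-γ+2*γ*(1-w)) * deriv f w < 0) ∧
      (∀ w ∈ Set.Icc (0:ℝ) 1, s ≤ w → 0 ≤ 4*γ*f w - (1-γ+2*γ*(1-w)) * deriv f w) := by
  set g : ℝ → ℝ := fun w => 4*γ*f w - (1-γ+2*γ*(1-w)) * deriv f w with hg_def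
  have hgc : ContinuousOn g (Set.Icc 0 1) := gcont γ f hfC1 hfC1'
  set S : Set ℝ := {w ∈ Set.Icc (0:ℝ) 1 | 0 ≤ g w} with hS_def
  have hSbdd : BddBelow S := ⟨0, fun w hw => hw.1.1⟩
  have hScl : IsClosed S := by
    have : S = Set.Icc (0:ℝ) 1 ∩ g ⁻¹' (Set.Ici 0) := by
      ext w; simp [hS_def, Set.mem_setOf_eq, and_comm]
    rw [this]
    exact hgc.preimage_isClosed_of_isClosed isClosed_Icc isClosed_Ici
  -- the contradiction helper
  have hcontra : ∀ (hbad : ∀ w ∈ Set.Ioo (a/2) a, g w < 0), False := by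
    intro hbad
    have hpos : 0 < ∫ w in (a/2)..a, (w-a)*g w := by
      apply intervalIntegral.intervalIntegral_pos_of_pos_on
      · apply ContinuousOn.intervalIntegrable
        apply ContinuousOn.mul (by fun_prop)
        exact hgc.mono (Set.uIcc_subset_Icc ⟨by linarith, by linarith⟩ ⟨by linarith, by linarith⟩)
      · intro w hw
        have := hbad w hw
        nlinarith [hw.1, hw.2]
      · linarith
    linarith
  have hSne : S.Nonempty := by
    by_contra hSe
    apply hcontra
    intro w hw
    by_contra hge
    exact hSe ⟨w, ⟨⟨by linarith [hw.1], by linarith [hw.2]⟩, by linarith⟩⟩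
  set s := sInf S with hs_def
  have hsmem : s ∈ S := hScl.csInf_mem hSne hSbdd
  have hs0 : 0 ≤ s := hsmem.1.1
  have hneg : ∀ w ∈ Set.Icc (0:ℝ) 1, w < s → g w < 0 := by
    intro w hw hws
    by_contra hge
    have : s ≤ w := csInf_le hSbdd ⟨hw, by linarith⟩
    linarith
  have hpos : ∀ w ∈ Set.Icc (0:ℝ) 1, s ≤ w → 0 ≤ g w := by
    intro w hw hsw
    rcases eq_or_lt_of_le hsw with rfl | hlt
    · exact hsmem.2
    · exact aux_cross γ hγ f hfpos hfC1 hlc hsmem.1 hw hsw hsmem.2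
  have hsa : s < a := by
    rcases lt_or_ge s a with h | h
    · exact h
    · exfalso; apply hcontra; intro w hw
      exact hneg w ⟨by linarith [hw.1], by linarith [hw.2]⟩ (by linarith [hw.2])
  exact ⟨s, hs0, hsa, hneg, hpos⟩


section Wlemmas
variable (γ : ℝ) (u : ℝ → ℝ) (F f W : ℝ → ℝ)

lemma W_cont (hγ : γ ∈ Set.Icc (0:ℝ) 1)
    (hu : ∀ a, u a = -(1 - γ) * |1 - a| - γ * (1 - a) ^ 2)
    (hfC1 : ∀ v ∈ Set.Icc (0:ℝ) 1, DifferentiableAt ℝ f v)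
    (hF : ∀ v ∈ Set.Icc (0:ℝ) 1, HasDerivAt F (f v) v)
    (hW : ∀ c, W c = u 0 * F (c / 2) + u c * (F c - F (c / 2)) +
      (∫ v in c..1, u v * f v) + u 1 * (1 - F 1)) :
    ContinuousOn W (Set.Icc 0 1) := by
  have hueq : u = fun a => -(1 - γ) * |1 - a| - γ * (1 - a) ^ 2 := funext hu
  have hucont : Continuous u := by
    rw [hueq]
    have h1 : Continuous fun a : ℝ => |1 - a| := (continuous_const.sub continuous_id).abs
    fun_prop
  have hfc : ContinuousOn f (Set.Icc 0 1) :=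
    fun v hv => ((hfC1 v hv).continuousAt).continuousWithinAt
  have hFc : ContinuousOn F (Set.Icc 0 1) :=
    fun v hv => ((hF v hv).continuousAt).continuousWithinAt
  have hmaps : Set.MapsTo (fun c : ℝ => c/2) (Set.Icc 0 1) (Set.Icc 0 1) := by
    intro x hx; exact ⟨by linarith [hx.1], by linarith [hx.2]⟩
  have hFc2 : ContinuousOn (fun c : ℝ => F (c/2)) (Set.Icc 0 1) :=
    hFc.comp ((continuous_id.div_const 2).continuousOn) hmaps
  have hint : ContinuousOn (fun c : ℝ => ∫ v in c..1, u v * f v) (Set.Icc 0 1) := by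
    have h1 : MeasureTheory.IntegrableOn (fun v => u v * f v) (Set.uIcc 0 1) := by
      rw [Set.uIcc_of_le (by norm_num : (0:ℝ) ≤ 1)]
      exact (ContinuousOn.mul hucont.continuousOn hfc).integrableOn_compact isCompact_Icc
    have := intervalIntegral.continuousOn_primitive_interval_left h1
    rwa [Set.uIcc_of_le (by norm_num : (0:ℝ) ≤ 1)] at this
  have : ContinuousOn (fun c => u 0 * F (c / 2) + u c * (F c - F (c / 2)) +
      (∫ v in c..1, u v * f v) + u 1 * (1 - F 1)) (Set.Icc 0 1) := by
    apply ContinuousOn.add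
    apply ContinuousOn.add
    apply ContinuousOn.add
    · exact continuousOn_const.mul hFc2
    · exact (hucont.continuousOn).mul (hFc.sub hFc2)
    · exact hint
    · exact continuousOn_const
  exact this.congr (fun c _ => hW c)

lemma W_deriv (hγ : γ ∈ Set.Icc (0:ℝ) 1)
    (hu : ∀ a, u a = -(1 - γ) * |1 - a| - γ * (1 - a) ^ 2)
    (hfpos : ∀ v ∈ Set.Icc (0:ℝ) 1, 0 < f v)
    (hfC1 : ∀ v ∈ Set.Icc (0:ℝ) 1, DifferentiableAt ℝ f v)
    (hF : ∀ v ∈ Set.Icc (0:ℝ) 1, HasDerivAt F (f v) v)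
    (hW : ∀ c, W c = u 0 * F (c / 2) + u c * (F c - F (c / 2)) +
      (∫ v in c..1, u v * f v) + u 1 * (1 - F 1))
    {c : ℝ} (hc0 : 0 < c) (hc1 : c < 1) :
    HasDerivAt W ((1-γ+2*γ*(1-c))*(F c - F (c/2)) - c/2*((1-γ+2*γ*(1-c/2))*f (c/2))) c := by
  have hueq : u = fun a => -(1 - γ) * |1 - a| - γ * (1 - a) ^ 2 := funext hu
  have hucont : Continuous u := by
    rw [hueq]
    have h1 : Continuous fun a : ℝ => |1 - a| := (continuous_const.sub continuous_id).abs
    fun_prop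
  have hfc : ∀ v ∈ Set.Icc (0:ℝ) 1, ContinuousAt f v :=
    fun v hv => (hfC1 v hv).continuousAt
  -- derivative of the smooth version
  set Ws : ℝ → ℝ := fun x => u 0 * F (x / 2) +
      (-(1 - γ) * (1-x) - γ * (1 - x) ^ 2) * (F x - F (x / 2)) +
      (∫ v in x..1, u v * f v) + u 1 * (1 - F 1) with hWs_def
  have hWW : W =ᶠ[nhds c] Ws := by
    have hmem : Set.Ioo (0:ℝ) 1 ∈ nhds c := isOpen_Ioo.mem_nhds ⟨hc0, hc1⟩
    filter_upwards [hmem] with x hx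
    rw [hW x, hWs_def]
    have : |1 - x| = 1 - x := abs_of_pos (by linarith [hx.2])
    simp only [hu x, this]
  -- pieces
  have hd1 : HasDerivAt (fun x : ℝ => F (x/2)) (f (c/2) * (1/2)) c := by
    have h2 : HasDerivAt (fun x : ℝ => x/2) (1/2 : ℝ) c := by
      simpa using (hasDerivAt_id c).div_const 2
    exact (hF (c/2) ⟨by linarith, by linarith⟩).comp c h2
  have hd2 : HasDerivAt (fun x : ℝ => -(1 - γ) * (1-x) - γ * (1 - x) ^ 2)
      (1-γ+2*γ*(1-c)) c := by
    have h1 : HasDerivAt (fun x : ℝ => 1 - x) (-1 : ℝ) c := by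
      simpa using (hasDerivAt_id c).const_sub 1
    have hp : HasDerivAt (fun x : ℝ => (1-x)^2) (2*(1-c)*(-1)) c := by
      have := h1.pow 2
      norm_num at this
      exact this.congr_deriv (by ring)
    have := (h1.const_mul (-(1-γ))).sub (hp.const_mul γ)
    exact this.congr_deriv (by ring)
  have hd3 : HasDerivAt (fun x : ℝ => ∫ v in x..1, u v * f v) (-(u c * f c)) c := by
    apply intervalIntegral.integral_hasDerivAt_left
    · apply ContinuousOn.intervalIntegrable
      apply ContinuousOn.mul hucont.continuousOn
      intro v hv
      rw [Set.uIcc_of_le (by linarith : c ≤ 1)] at hv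
      exact (hfc v ⟨by linarith [hv.1], hv.2⟩).continuousWithinAt
    · apply ContinuousOn.stronglyMeasurableAtFilter isOpen_Ioo _ _ ⟨hc0, hc1⟩
      exact hucont.continuousOn.mul
        (fun v hv => (hfc v ⟨(le_of_lt hv.1), (le_of_lt hv.2)⟩).continuousWithinAt)
    · exact hucont.continuousAt.mul (hfc c ⟨hc0.le, hc1.le⟩)
  have hdW : HasDerivAt Ws (u 0 * (f (c/2) * (1/2)) +
      ((1-γ+2*γ*(1-c)) * (F c - F (c/2)) +
        (-(1 - γ) * (1-c) - γ * (1 - c) ^ 2) * (f c - f (c/2) * (1/2))) +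
      (-(u c * f c)) + 0) c := by
    apply HasDerivAt.add
    apply HasDerivAt.add
    apply HasDerivAt.add
    · exact hd1.const_mul (u 0)
    · exact hd2.mul ((hF c ⟨hc0.le, hc1.le⟩).sub hd1)
    · exact hd3
    · exact hasDerivAt_const c _
  have hfinal := hdW.congr_of_eventuallyEq hWW
  refine hfinal.congr_deriv ?_
  have hu0 : u 0 = -1 := by rw [hu 0]; norm_num
  have huc : u c = -(1 - γ) * (1-c) - γ * (1 - c) ^ 2 := by
    rw [hu c, abs_of_pos (by linarith : (0:ℝ) < 1 - c)]
  rw [hu0, huc]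
  ring
end Wlemmas


lemma psi_eq (γ : ℝ) (F f : ℝ → ℝ)
    (hfC1 : ∀ v ∈ Set.Icc (0:ℝ) 1, DifferentiableAt ℝ f v)
    (hfC1' : ContinuousOn (deriv f) (Set.Icc 0 1))
    (hF : ∀ v ∈ Set.Icc (0:ℝ) 1, HasDerivAt F (f v) v)
    {c : ℝ} (hc0 : 0 < c) (hc1 : c ≤ 1) :
    (∫ w in (c/2)..c, (w-c)*(4*γ*f w - (1-γ+2*γ*(1-w)) * deriv f w))
      = (1-γ+2*γ*(1-c))*(F c - F (c/2)) - c/2*((1-γ+2*γ*(1-c/2))*f (c/2)) := by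
  set H : ℝ → ℝ := fun w => (w-c)*(2*γ*F w - (1-γ+2*γ*(1-w))*f w) + (1-γ+2*γ*(1-w))*F w
    with hH_def
  have hsub : Set.uIcc (c/2) c ⊆ Set.Icc (0:ℝ) 1 := by
    rw [Set.uIcc_of_le (by linarith : c/2 ≤ c)]
    intro w hw
    exact ⟨by linarith [hw.1], by linarith [hw.2]⟩
  have hderiv : ∀ w ∈ Set.uIcc (c/2) c,
      HasDerivAt H ((w-c)*(4*γ*f w - (1-γ+2*γ*(1-w)) * deriv f w)) w := by
    intro w hw
    have hw1 : w ∈ Set.Icc (0:ℝ) 1 := hsub hw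
    have hB : HasDerivAt (fun w : ℝ => 1-γ+2*γ*(1-w)) (-(2*γ)) w := by
      have h1 : HasDerivAt (fun w : ℝ => 1 - w) (-1 : ℝ) w := by
        simpa using (hasDerivAt_id w).const_sub 1
      have := (h1.const_mul (2*γ)).const_add (1-γ)
      exact this.congr_deriv (by ring)
    have hG : HasDerivAt (fun w : ℝ => 2*γ*F w - (1-γ+2*γ*(1-w))*f w)
        (2*γ*f w - ((-(2*γ))*f w + (1-γ+2*γ*(1-w))*deriv f w)) w :=
      ((hF w hw1).const_mul (2*γ)).sub (hB.mul (hfC1 w hw1).hasDerivAt)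
    have hD := ((hasDerivAt_id w).sub_const c).mul hG
    have hE := hB.mul (hF w hw1)
    have := hD.add hE
    simp only [id_eq] at this
    exact this.congr_deriv (by ring)
  have hint : IntervalIntegrable
      (fun w => (w-c)*(4*γ*f w - (1-γ+2*γ*(1-w)) * deriv f w))
      MeasureTheory.volume (c/2) c := by
    apply ContinuousOn.intervalIntegrable
    apply ContinuousOn.mul (by fun_prop)
    have hfc : ContinuousOn f (Set.Icc 0 1) :=
      fun v hv => ((hfC1 v hv).continuousAt).continuousWithinAt
    exact (((continuousOn_const.mul hfc).sub
      ((Continuous.continuousOn (by continuity)).mul hfC1'))).mono hsub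
  rw [intervalIntegral.integral_eq_sub_of_hasDerivAt hderiv hint]
  rw [hH_def]
  ring


lemma key_trans (γ : ℝ) (hγ : γ ∈ Set.Icc (0:ℝ) 1) (F f : ℝ → ℝ)
    (hfpos : ∀ v ∈ Set.Icc (0:ℝ) 1, 0 < f v)
    (hfC1 : ∀ v ∈ Set.Icc (0:ℝ) 1, DifferentiableAt ℝ f v)
    (hfC1' : ContinuousOn (deriv f) (Set.Icc 0 1))
    (hF : ∀ v ∈ Set.Icc (0:ℝ) 1, HasDerivAt F (f v) v)
    (hlc : ConcaveOn ℝ (Set.Icc 0 1) (fun v => Real.log (f v)))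
    {a b : ℝ} (ha : 0 < a) (hab : a < b) (hb1 : b ≤ 1)
    (hpa : (1-γ+2*γ*(1-a))*(F a - F (a/2)) - a/2*((1-γ+2*γ*(1-a/2))*f (a/2)) ≤ 0) :
    (1-γ+2*γ*(1-b))*(F b - F (b/2)) - b/2*((1-γ+2*γ*(1-b/2))*f (b/2)) ≤ 0 := by
  have ha1 : a ≤ 1 := le_of_lt (lt_of_lt_of_le hab hb1)
  have hψa : (∫ w in (a/2)..a, (w-a)*(4*γ*f w - (1-γ+2*γ*(1-w)) * deriv f w)) ≤ 0 := by
    rw [psi_eq γ F f hfC1 hfC1' hF ha ha1]; exact hpa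
  obtain ⟨s, hs0, hsa, hneg, hpos⟩ := exists_s γ hγ f hfpos hfC1 hfC1' hlc ha ha1 hψa
  have := key_weak _ (gcont γ f hfC1 hfC1') ha hab hb1 hs0 hsa hneg hpos hψa
  rwa [psi_eq γ F f hfC1 hfC1' hF (ha.trans hab) hb1] at this

lemma key_trans_strict (γ : ℝ) (hγ : γ ∈ Set.Icc (0:ℝ) 1) (F f : ℝ → ℝ)
    (hfpos : ∀ v ∈ Set.Icc (0:ℝ) 1, 0 < f v)
    (hfC1 : ∀ v ∈ Set.Icc (0:ℝ) 1, DifferentiableAt ℝ f v)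
    (hfC1' : ContinuousOn (deriv f) (Set.Icc 0 1))
    (hF : ∀ v ∈ Set.Icc (0:ℝ) 1, HasDerivAt F (f v) v)
    (hlc : ConcaveOn ℝ (Set.Icc 0 1) (fun v => Real.log (f v)))
    (hstrict : 0 < γ ∨ StrictConcaveOn ℝ (Set.Icc 0 1) (fun v => Real.log (f v)))
    {a b : ℝ} (ha : 0 < a) (hab : a < b) (hb1 : b ≤ 1)
    (hpa : (1-γ+2*γ*(1-a))*(F a - F (a/2)) - a/2*((1-γ+2*γ*(1-a/2))*f (a/2)) ≤ 0) :
    (1-γ+2*γ*(1-b))*(F b - F (b/2)) - b/2*((1-γ+2*γ*(1-b/2))*f (b/2)) < 0 := by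
  have ha1 : a ≤ 1 := le_of_lt (lt_of_lt_of_le hab hb1)
  have hψa : (∫ w in (a/2)..a, (w-a)*(4*γ*f w - (1-γ+2*γ*(1-w)) * deriv f w)) ≤ 0 := by
    rw [psi_eq γ F f hfC1 hfC1' hF ha ha1]; exact hpa
  obtain ⟨s, hs0, hsa, hneg, hpos⟩ := exists_s γ hγ f hfpos hfC1 hfC1' hlc ha ha1 hψa
  have hsmem : s ∈ Set.Icc (0:ℝ) 1 := ⟨hs0, by linarith⟩
  have hposS : ∀ w ∈ Set.Icc (0:ℝ) 1, s < w →
      0 < 4*γ*f w - (1-γ+2*γ*(1-w)) * deriv f w := by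
    intro w hw hsw
    exact aux_cross_strict γ hγ f hfpos hfC1 hlc hstrict hsmem hw hsw
      (hpos s hsmem le_rfl)
  have := key_strict _ (gcont γ f hfC1 hfC1') ha hab hb1 hs0 hsa hneg hpos hposS hψa
  rwa [psi_eq γ F f hfC1 hfC1' hF (ha.trans hab) hb1] at this


/-- Under linear-quadratic Proposer utility and a logconcave type
density, the welfare `W` from interval delegation is quasiconcave on `[0,1]`,
strictly so if `γ > 0` or `f` is strictly logconcave. -/
theorem stmt_10 (γ : ℝ) (hγ : γ ∈ Set.Icc (0:ℝ) 1)
    (u : ℝ → ℝ) (hu : ∀ a, u a = -(1 - γ) * |1 - a| - γ * (1 - a) ^ 2)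
    (F f : ℝ → ℝ)
    (hfpos : ∀ v ∈ Set.Icc (0:ℝ) 1, 0 < f v)
    (hfC1 : ∀ v ∈ Set.Icc (0:ℝ) 1, DifferentiableAt ℝ f v)
    (hfC1' : ContinuousOn (deriv f) (Set.Icc 0 1))
    (hF : ∀ v ∈ Set.Icc (0:ℝ) 1, HasDerivAt F (f v) v)
    (hlc : ConcaveOn ℝ (Set.Icc 0 1) (fun v => Real.log (f v)))
    (W : ℝ → ℝ)
    (hW : ∀ c, W c = u 0 * F (c / 2) + u c * (F c - F (c / 2)) +
      (∫ v in c..1, u v * f v) + u 1 * (1 - F 1)) :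
    QuasiconcaveOn ℝ (Set.Icc 0 1) W ∧
      ((0 < γ ∨ StrictConcaveOn ℝ (Set.Icc 0 1) (fun v => Real.log (f v))) →
        ∀ c₁ ∈ Set.Icc (0:ℝ) 1, ∀ c₂ ∈ Set.Icc (0:ℝ) 1, c₁ ≠ c₂ →
          ∀ t ∈ Set.Ioo (0:ℝ) 1,
            min (W c₁) (W c₂) < W (t * c₁ + (1 - t) * c₂)) := by
  set Ψ : ℝ → ℝ :=
    fun c => (1-γ+2*γ*(1-c))*(F c - F (c/2)) - c/2*((1-γ+2*γ*(1-c/2))*f (c/2)) with hΨ_def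
  have hWc : ContinuousOn W (Set.Icc 0 1) := W_cont γ u F f W hγ hu hfC1 hF hW
  have hWd : ∀ c ∈ Set.Ioo (0:ℝ) 1, HasDerivAt W (Ψ c) c :=
    fun c hc => W_deriv γ u F f W hγ hu hfpos hfC1 hF hW hc.1 hc.2
  have hderivW : ∀ c ∈ Set.Ioo (0:ℝ) 1, deriv W c = Ψ c := fun c hc => (hWd c hc).deriv
  have hKw : ∀ {a b : ℝ}, 0 < a → a < b → b ≤ 1 → Ψ a ≤ 0 → Ψ b ≤ 0 :=
    fun ha hab hb1 hpa => key_trans γ hγ F f hfpos hfC1 hfC1' hF hlc ha hab hb1 hpa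
  -- the set of points where the derivative has turned nonpositive
  set T : Set ℝ := {c : ℝ | c ∈ Set.Ioc (0:ℝ) 1 ∧ Ψ c ≤ 0} with hT_def
  have hTbdd : BddBelow T := ⟨0, fun w hw => hw.1.1.le⟩
  constructor
  · -- quasiconcavity
    rcases Set.eq_empty_or_nonempty T with hTe | hTne
    · -- W is monotone
      have hmono : MonotoneOn W (Set.Icc 0 1) := by
        apply monotoneOn_of_deriv_nonneg (convex_Icc 0 1) hWc
        · intro x hx
          rw [interior_Icc] at hx
          exact (hWd x hx).differentiableAt.differentiableWithinAt
        · intro x hx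
          rw [interior_Icc] at hx
          rw [hderivW x hx]
          by_contra hneg
          exact (Set.eq_empty_iff_forall_notMem.1 hTe) x
            ⟨⟨hx.1, hx.2.le⟩, by linarith⟩
      exact hmono.quasiconcaveOn (convex_Icc 0 1)
    · set cs := sInf T with hcs_def
      obtain ⟨t₀, ht₀⟩ := id hTne
      have hcs0 : 0 ≤ cs := le_csInf hTne (fun w hw => hw.1.1.le)
      have hcs1 : cs ≤ 1 := le_trans (csInf_le hTbdd ht₀) ht₀.1.2
      have hmono : MonotoneOn W (Set.Icc 0 cs) := by
        apply monotoneOn_of_deriv_nonneg (convex_Icc 0 cs)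
          (hWc.mono (Set.Icc_subset_Icc le_rfl hcs1))
        · intro x hx
          rw [interior_Icc] at hx
          exact (hWd x ⟨hx.1, lt_of_lt_of_le hx.2 hcs1⟩).differentiableAt.differentiableWithinAt
        · intro x hx
          rw [interior_Icc] at hx
          rw [hderivW x ⟨hx.1, lt_of_lt_of_le hx.2 hcs1⟩]
          by_contra hneg
          have : cs ≤ x := csInf_le hTbdd ⟨⟨hx.1, by linarith [hx.2]⟩, by linarith⟩
          linarith [hx.2]
      have hanti : AntitoneOn W (Set.Icc cs 1) := by
        apply antitoneOn_of_deriv_nonpos (convex_Icc cs 1)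
          (hWc.mono (Set.Icc_subset_Icc hcs0 le_rfl))
        · intro x hx
          rw [interior_Icc] at hx
          exact (hWd x ⟨lt_of_le_of_lt hcs0 hx.1, hx.2⟩).differentiableAt.differentiableWithinAt
        · intro x hx
          rw [interior_Icc] at hx
          rw [hderivW x ⟨lt_of_le_of_lt hcs0 hx.1, hx.2⟩]
          obtain ⟨a, haT, hax⟩ := exists_lt_of_csInf_lt hTne hx.1
          exact hKw haT.1.1 hax hx.2.le haT.2
      intro β
      apply Set.OrdConnected.convex
      constructor
      intro x hx y hy z hz
      simp only [Set.mem_sep_iff] at hx hy ⊢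
      obtain ⟨⟨hx0, hx1⟩, hWx⟩ := hx
      obtain ⟨⟨hy0, hy1⟩, hWy⟩ := hy
      obtain ⟨hxz, hzy⟩ := hz
      refine ⟨⟨by linarith, by linarith⟩, ?_⟩
      rcases le_or_gt z cs with hzc | hzc
      · exact le_trans hWx (hmono ⟨hx0, by linarith⟩ ⟨by linarith, hzc⟩ hxz)
      · exact le_trans hWy (hanti ⟨hzc.le, by linarith⟩ ⟨by linarith, hy1⟩ hzy)
  · -- strict quasiconcavity
    intro hstrict c₁ hc₁ c₂ hc₂ hne t ht
    have hKs : ∀ {a b : ℝ}, 0 < a → a < b → b ≤ 1 → Ψ a ≤ 0 → Ψ b < 0 :=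
      fun ha hab hb1 hpa =>
        key_trans_strict γ hγ F f hfpos hfC1 hfC1' hF hlc hstrict ha hab hb1 hpa
    have hmain : ∀ x y p : ℝ, x ∈ Set.Icc (0:ℝ) 1 → y ∈ Set.Icc (0:ℝ) 1 → x < y →
        p ∈ Set.Ioo x y → min (W x) (W y) < W p := by
      intro x y p hx hy hxy hp
      have hx0 := hx.1
      have hy1 := hy.2
      have hp0 : 0 < p := lt_of_le_of_lt hx0 hp.1
      have hp1 : p < 1 := lt_of_lt_of_le hp.2 (by linarith [hy.2] : y ≤ 1)
      rcases Set.eq_empty_or_nonempty T with hTe | hTne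
      · have hsmono : StrictMonoOn W (Set.Icc 0 1) := by
          apply strictMonoOn_of_deriv_pos (convex_Icc 0 1) hWc
          intro z hz
          rw [interior_Icc] at hz
          rw [hderivW z hz]
          by_contra hneg
          exact (Set.eq_empty_iff_forall_notMem.1 hTe) z
            ⟨⟨hz.1, hz.2.le⟩, by linarith⟩
        calc min (W x) (W y) ≤ W x := min_le_left _ _
          _ < W p := hsmono hx ⟨hp0.le, by linarith⟩ hp.1
      · set cs := sInf T with hcs_def
        obtain ⟨t₀, ht₀⟩ := id hTne
        have hcs0 : 0 ≤ cs := le_csInf hTne (fun w hw => hw.1.1.le)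
        have hcs1 : cs ≤ 1 := le_trans (csInf_le hTbdd ht₀) ht₀.1.2
        have hsmono : StrictMonoOn W (Set.Icc 0 cs) := by
          apply strictMonoOn_of_deriv_pos (convex_Icc 0 cs)
            (hWc.mono (Set.Icc_subset_Icc le_rfl hcs1))
          intro z hz
          rw [interior_Icc] at hz
          rw [hderivW z ⟨hz.1, lt_of_lt_of_le hz.2 hcs1⟩]
          by_contra hneg
          have : cs ≤ z := csInf_le hTbdd ⟨⟨hz.1, by linarith [hz.2]⟩, by linarith⟩
          linarith [hz.2]
        have hsanti : StrictAntiOn W (Set.Icc cs 1) := by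
          apply strictAntiOn_of_deriv_neg (convex_Icc cs 1)
            (hWc.mono (Set.Icc_subset_Icc hcs0 le_rfl))
          intro z hz
          rw [interior_Icc] at hz
          rw [hderivW z ⟨lt_of_le_of_lt hcs0 hz.1, hz.2⟩]
          obtain ⟨a, haT, haz⟩ := exists_lt_of_csInf_lt hTne hz.1
          exact hKs haT.1.1 haz hz.2.le haT.2
        rcases le_or_gt p cs with hpc | hpc
        · calc min (W x) (W y) ≤ W x := min_le_left _ _
            _ < W p := hsmono ⟨hx0, by linarith [hp.1]⟩ ⟨hp0.le, hpc⟩ hp.1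
        · calc min (W x) (W y) ≤ W y := min_le_right _ _
            _ < W p := hsanti ⟨hpc.le, hp1.le⟩ ⟨by linarith [hp.2], hy1⟩ hp.2
    rcases hne.lt_or_gt with hlt | hlt
    · apply hmain c₁ c₂ _ hc₁ hc₂ hlt
      constructor <;> nlinarith [ht.1, ht.2]
    · rw [min_comm]
      apply hmain c₂ c₁ _ hc₂ hc₁ hlt
      constructor <;> nlinarith [ht.1, ht.2]
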